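/- Let P₁,…,P_k ⊂ ℝ^n be compact convex sets with nonempty interior such that 0 lies in the interior of the Minkowski sum P₁+⋯+P_k. Then the smooth strictly convex function G(W) = Σ_{α=1}^k log ∫_{P_α} e^{⟨W,p⟩} dp is proper (G(W) → +∞ as |W| → ∞), and consequently there exists a unique W ∈ ℝ^n such that Σ_{α=1}^k 𝒜_{P_α}(W) = 0. -/

import Mathlib

open MeasureTheory

/-- the weighted barycenter
`𝒜_P(W) = (∫_P p e^{⟨W,p⟩} dp)/(∫_P e^{⟨W,p⟩} dp)` of a convex body
`P ⊂ ℝ^n`, the integrals being taken with respect to Lebesgue measure. -/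
noncomputable def wBary {n : ℕ} (P : Set (EuclideanSpace ℝ (Fin n)))
    (W : EuclideanSpace ℝ (Fin n)) : EuclideanSpace ℝ (Fin n) :=
  (∫ p in P, Real.exp (inner ℝ W p : ℝ))⁻¹ •
    ∫ p in P, Real.exp (inner ℝ W p : ℝ) • p

/-- the Minkowski sum `P₁ + ⋯ + P_k` of subsets of `ℝ^n` -/
def minkSum {n k : ℕ} (P : Fin k → Set (EuclideanSpace ℝ (Fin n))) :
    Set (EuclideanSpace ℝ (Fin n)) :=
  {p | ∃ q : Fin k → EuclideanSpace ℝ (Fin n), (∀ α, q α ∈ P α) ∧ p = ∑ α, q α}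

set_option maxHeartbeats 1000000
set_option synthInstance.maxHeartbeats 1000000

namespace WBaryAux

open Real Metric

variable {n : ℕ}
local notation "E" => EuclideanSpace ℝ (Fin n)

theorem contExp (W : E) : Continuous fun p : E => Real.exp (inner ℝ W p : ℝ) :=
  Real.continuous_exp.comp (continuous_const.inner continuous_id)

theorem intExp {P : Set E} (hPc : IsCompact P) (W : E) :
    IntegrableOn (fun p : E => Real.exp (inner ℝ W p : ℝ)) P :=
  (contExp W).continuousOn.integrableOn_compact hPc

theorem intExpSmul {P : Set E} (hPc : IsCompact P) (W : E) :
    IntegrableOn (fun p : E => Real.exp (inner ℝ W p : ℝ) • p) P :=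
  (((contExp W).smul continuous_id)).continuousOn.integrableOn_compact hPc

theorem Zpos {P : Set E} (hPc : IsCompact P) (hPint : (interior P).Nonempty) (W : E) :
    0 < ∫ p in P, Real.exp (inner ℝ W p : ℝ) := by
  rw [setIntegral_pos_iff_support_of_nonneg_ae
    (Filter.Eventually.of_forall fun p => (Real.exp_pos _).le) (intExp hPc W)]
  have hs : Function.support (fun p : E => Real.exp (inner ℝ W p : ℝ)) = Set.univ := by
    ext p; simp [Function.support, (Real.exp_pos _).ne']
  rw [hs, Set.univ_inter]
  exact lt_of_lt_of_le (isOpen_interior.measure_pos _ hPint) (measure_mono interior_subset)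

theorem expInnerDeriv (p : E) (x : E) :
    HasFDerivAt (fun x : E => Real.exp (inner ℝ x p : ℝ))
      (Real.exp (inner ℝ x p : ℝ) • innerSL ℝ p) x := by
  have h1 : HasFDerivAt (fun x : E => (inner ℝ x p : ℝ)) (innerSL ℝ p) x := by
    have : (fun x : E => (inner ℝ x p : ℝ)) = fun x => innerSL ℝ p x := by
      funext x; simp only [innerSL_apply_apply]; exact (real_inner_comm x p).symm
    rw [this]; exact (innerSL ℝ p).hasFDerivAt
  exact h1.exp

theorem hasFDerivZ {P : Set E} (hPc : IsCompact P) (W : E) :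
    HasFDerivAt (fun W : E => ∫ p in P, Real.exp (inner ℝ W p : ℝ))
      (innerSL ℝ (∫ p in P, Real.exp (inner ℝ W p : ℝ) • p)) W := by
  obtain ⟨R, hR⟩ : ∃ R, ∀ p ∈ P, ‖p‖ ≤ R := hPc.isBounded.exists_norm_le
  have key := hasFDerivAt_integral_of_dominated_of_fderiv_le
    (μ := volume.restrict P) (𝕜 := ℝ)
    (F := fun x (p : E) => Real.exp (inner ℝ x p : ℝ))
    (F' := fun x (p : E) => Real.exp (inner ℝ x p : ℝ) • innerSL ℝ p)
    (x₀ := W) (bound := fun _ => Real.exp ((‖W‖ + 1) * max R 0) * max R 0)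
    (s := ball W 1) (ball_mem_nhds W one_pos)
    (Filter.Eventually.of_forall fun x => ((contExp x)).aestronglyMeasurable)
    (intExp hPc W)
    ((((contExp W).smul (innerSL ℝ).continuous)).aestronglyMeasurable)
    ?_ ?_ ?_
  · refine key.congr_fderiv ?_
    symm
    refine ContinuousLinearMap.ext fun v => ?_
    have hint : Integrable (fun p : E => Real.exp (inner ℝ W p : ℝ) • innerSL ℝ p)
        (volume.restrict P) :=
      (((contExp W).smul (innerSL ℝ).continuous)).continuousOn.integrableOn_compact hPc
    rw [ContinuousLinearMap.integral_apply hint]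
    have hint2 : Integrable (fun p : E => Real.exp (inner ℝ W p : ℝ) • p) (volume.restrict P) :=
      intExpSmul hPc W
    calc (innerSL ℝ (∫ p in P, Real.exp (inner ℝ W p : ℝ) • p)) v
        = (inner ℝ (∫ p in P, Real.exp (inner ℝ W p : ℝ) • p) v : ℝ) := by
          simp only [innerSL_apply_apply]
      _ = (inner ℝ v (∫ p in P, Real.exp (inner ℝ W p : ℝ) • p) : ℝ) := real_inner_comm _ _
      _ = ∫ p in P, (inner ℝ v (Real.exp (inner ℝ W p : ℝ) • p) : ℝ) := (integral_inner hint2 v).symm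
      _ = ∫ p in P, (Real.exp (inner ℝ W p : ℝ) • innerSL ℝ p) v := by
          refine integral_congr_ae (Filter.Eventually.of_forall fun p => ?_)
          simp only [ContinuousLinearMap.coe_smul', Pi.smul_apply, innerSL_apply_apply,
            real_inner_smul_right, smul_eq_mul]
          rw [real_inner_comm v p]
  · filter_upwards [ae_restrict_mem hPc.isClosed.measurableSet] with p hp x hx
    have hpR : ‖p‖ ≤ max R 0 := le_max_of_le_left (hR p hp)
    have hxn : ‖x‖ ≤ ‖W‖ + 1 := by
      have h2 := mem_ball_iff_norm.mp hx
      have h3 : ‖x‖ - ‖W‖ ≤ 1 := le_trans (norm_sub_norm_le _ _) h2.le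
      linarith
    have h1 : (inner ℝ x p : ℝ) ≤ (‖W‖ + 1) * max R 0 := by
      calc (inner ℝ x p : ℝ) ≤ ‖x‖ * ‖p‖ := real_inner_le_norm x p
        _ ≤ (‖W‖ + 1) * max R 0 :=
          mul_le_mul hxn hpR (norm_nonneg _) (by positivity)
    calc ‖Real.exp (inner ℝ x p : ℝ) • innerSL ℝ p‖
        = Real.exp (inner ℝ x p : ℝ) * ‖p‖ := by
          rw [norm_smul (Real.exp (inner ℝ x p : ℝ)) ((innerSL ℝ) p), Real.norm_eq_abs,
            abs_of_pos (Real.exp_pos _), innerSL_apply_norm]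
      _ ≤ Real.exp ((‖W‖ + 1) * max R 0) * max R 0 :=
          mul_le_mul (Real.exp_le_exp.mpr h1) hpR (norm_nonneg _) (Real.exp_pos _).le
  · exact integrableOn_const hPc.measure_lt_top.ne
  · exact Filter.Eventually.of_forall fun p x _ => expInnerDeriv p x

theorem hasFDerivLogZ {P : Set E} (hPc : IsCompact P) (hPint : (interior P).Nonempty) (W : E) :
    HasFDerivAt (fun W : E => Real.log (∫ p in P, Real.exp (inner ℝ W p : ℝ)))
      (innerSL ℝ (wBary P W)) W := by
  have h := (hasFDerivZ hPc W).log (Zpos hPc hPint W).ne'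
  have h2 : (∫ p in P, Real.exp (inner ℝ W p : ℝ))⁻¹
      • innerSL ℝ (∫ p in P, Real.exp (inner ℝ W p : ℝ) • p) = innerSL ℝ (wBary P W) := by
    rw [wBary]; exact (_root_.map_smul (innerSL ℝ) _ _).symm
  rwa [h2] at h

theorem Z_convexOn {P : Set E} (hPc : IsCompact P) (hPint : (interior P).Nonempty) :
    ConvexOn ℝ Set.univ (fun W : E => Real.log (∫ p in P, Real.exp (inner ℝ W p : ℝ))) := by
  refine ⟨convex_univ, fun x _ y _ a b ha hb hab => ?_⟩
  rcases ha.eq_or_lt with rfl | ha'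
  · have hb1 : b = 1 := by linarith
    subst hb1; simp
  rcases hb.eq_or_lt with rfl | hb'
  · have ha1 : a = 1 := by linarith
    subst ha1; simp
  have ha1 : a < 1 := by linarith
  set Zx := ∫ p in P, Real.exp (inner ℝ x p : ℝ) with hZx
  set Zy := ∫ p in P, Real.exp (inner ℝ y p : ℝ) with hZy
  have key : (∫ p in P, Real.exp (inner ℝ (a • x + b • y) p : ℝ)) ≤ Zx ^ a * Zy ^ b := by
    have hpt : ∀ p : E, Real.exp (inner ℝ (a • x + b • y) p : ℝ)
        = Real.exp (inner ℝ x p : ℝ) ^ a * Real.exp (inner ℝ y p : ℝ) ^ b := by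
      intro p
      rw [inner_add_left, real_inner_smul_left, real_inner_smul_left,
        Real.rpow_def_of_pos (Real.exp_pos _), Real.rpow_def_of_pos (Real.exp_pos _),
        Real.log_exp, Real.log_exp, ← Real.exp_add]
      ring_nf
    have hconj : Real.HolderConjugate (1/a) (1/b) := by
      rw [Real.holderConjugate_iff]
      constructor
      · rw [lt_div_iff₀ ha', one_mul]; exact ha1
      · simp only [one_div, inv_inv]; exact hab
    set F : E → ENNReal := fun p => ENNReal.ofReal (Real.exp (inner ℝ x p : ℝ)) with hF
    set G : E → ENNReal := fun p => ENNReal.ofReal (Real.exp (inner ℝ y p : ℝ)) with hG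
    have hFm : AEMeasurable F (volume.restrict P) :=
      (((contExp x)).measurable.ennreal_ofReal).aemeasurable
    have hGm : AEMeasurable G (volume.restrict P) :=
      (((contExp y)).measurable.ennreal_ofReal).aemeasurable
    have holder := ENNReal.lintegral_mul_le_Lp_mul_Lq (volume.restrict P) hconj
      (hFm.pow_const a) (hGm.pow_const b)
    have e1 : ENNReal.ofReal (∫ p in P, Real.exp (inner ℝ (a • x + b • y) p : ℝ))
        = ∫⁻ p in P, (F p ^ a) * (G p ^ b) := by
      rw [ofReal_integral_eq_lintegral_ofReal (intExp hPc _)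
        (Filter.Eventually.of_forall fun p => (Real.exp_pos _).le)]
      refine lintegral_congr fun p => ?_
      rw [hpt p, ENNReal.ofReal_mul (Real.rpow_nonneg (Real.exp_pos _).le _)]
      rw [ENNReal.ofReal_rpow_of_pos (Real.exp_pos _), ENNReal.ofReal_rpow_of_pos (Real.exp_pos _)]
    have e2 : (∫⁻ p in P, F p ∂volume) = ENNReal.ofReal Zx := by
      rw [hZx, ofReal_integral_eq_lintegral_ofReal (intExp hPc x)
        (Filter.Eventually.of_forall fun p => (Real.exp_pos _).le)]
    have e3 : (∫⁻ p in P, G p ∂volume) = ENNReal.ofReal Zy := by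
      rw [hZy, ofReal_integral_eq_lintegral_ofReal (intExp hPc y)
        (Filter.Eventually.of_forall fun p => (Real.exp_pos _).le)]
    have e4 : ∀ p : E, ((F p ^ a) ^ (1/a : ℝ)) = F p := by
      intro p; rw [← ENNReal.rpow_mul, mul_one_div, div_self ha'.ne', ENNReal.rpow_one]
    have e5 : ∀ p : E, ((G p ^ b) ^ (1/b : ℝ)) = G p := by
      intro p; rw [← ENNReal.rpow_mul, mul_one_div, div_self hb'.ne', ENNReal.rpow_one]
    have main : ENNReal.ofReal (∫ p in P, Real.exp (inner ℝ (a • x + b • y) p : ℝ))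
        ≤ ENNReal.ofReal (Zx ^ a * Zy ^ b) := by
      rw [e1]
      calc (∫⁻ p in P, (F p ^ a) * (G p ^ b))
          ≤ (∫⁻ p in P, (F p ^ a) ^ (1/a : ℝ)) ^ (1/(1/a) : ℝ)
            * (∫⁻ p in P, (G p ^ b) ^ (1/b : ℝ)) ^ (1/(1/b) : ℝ) := holder
        _ = ENNReal.ofReal (Zx ^ a * Zy ^ b) := by
            simp only [e4, e5, one_div_one_div]
            rw [e2, e3, ENNReal.ofReal_mul (Real.rpow_nonneg (Zpos hPc hPint x).le _),
              ← ENNReal.ofReal_rpow_of_pos (Zpos hPc hPint x),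
              ← ENNReal.ofReal_rpow_of_pos (Zpos hPc hPint y)]
    rw [ENNReal.ofReal_le_ofReal_iff (by positivity)] at main
    exact main
  calc Real.log (∫ p in P, Real.exp (inner ℝ (a • x + b • y) p : ℝ))
      ≤ Real.log (Zx ^ a * Zy ^ b) := Real.log_le_log (Zpos hPc hPint _) key
    _ = a * Real.log Zx + b * Real.log Zy := by
        rw [Real.log_mul (Real.rpow_pos_of_pos (Zpos hPc hPint x) a).ne'
          (Real.rpow_pos_of_pos (Zpos hPc hPint y) b).ne',
          Real.log_rpow (Zpos hPc hPint x), Real.log_rpow (Zpos hPc hPint y)]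

theorem not_ae_inner_const {P : Set E} (hPc : IsCompact P)
    (hPint : (interior P).Nonempty) {u : E} (hu : u ≠ 0) (c : ℝ) :
    ¬ (∀ᵐ p ∂(volume.restrict P), (inner ℝ u p : ℝ) = c) := by
  intro h
  obtain ⟨z, hz⟩ := hPint
  obtain ⟨r, hr, hball⟩ := Metric.isOpen_iff.mp isOpen_interior z hz
  have hballP : ball z r ⊆ P := hball.trans interior_subset
  set N : Set E := {p : E | (inner ℝ u p : ℝ) = c} with hN
  have hNclosed : IsClosed N := isClosed_eq (continuous_const.inner continuous_id) continuous_const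
  have hNnull : volume N = 0 := by
    set K : Submodule ℝ (EuclideanSpace ℝ (Fin n)) := LinearMap.ker ((innerSL ℝ u : E →ₗ[ℝ] ℝ)) with hK
    have hKne : K ≠ ⊤ := by
      intro htop
      have h2 : (inner ℝ u u : ℝ) = 0 := by
        have : u ∈ K := htop ▸ Submodule.mem_top
        simpa [hK] using this
      exact hu (inner_self_eq_zero.mp h2)
    have hKnull : volume (K : Set (EuclideanSpace ℝ (Fin n))) = 0 :=
      Measure.addHaar_submodule volume K hKne
    set p₀ : E := (c / (‖u‖^2)) • u with hp₀
    have hup₀ : (inner ℝ u p₀ : ℝ) = c := by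
      rw [hp₀, real_inner_smul_right, real_inner_self_eq_norm_sq]
      exact div_mul_cancel₀ c (pow_pos (norm_pos_iff.mpr hu) 2).ne'
    have hNeq : N = (fun v => -p₀ + v) ⁻¹' (K : Set (EuclideanSpace ℝ (Fin n))) := by
      ext p
      simp only [hN, Set.mem_setOf_eq, Set.mem_preimage, SetLike.mem_coe, hK,
        LinearMap.mem_ker, ContinuousLinearMap.coe_coe, innerSL_apply_apply, inner_add_right, inner_neg_right, hup₀]
      constructor
      · intro hp; rw [hp]; ring
      · intro hp; linarith
    rw [hNeq, measure_preimage_add]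
    exact hKnull
  have hcompl : volume (ball z r \ N) = 0 := by
    have h1 : volume.restrict P {p : E | ¬ ((inner ℝ u p : ℝ) = c)} = 0 := by
      rw [ae_iff] at h; exact h
    rw [Measure.restrict_apply' hPc.isClosed.measurableSet] at h1
    refine measure_mono_null ?_ h1
    intro p hp
    exact ⟨hp.2, hballP hp.1⟩
  have hzero : volume (ball z r) = 0 := by
    have h2 : volume (ball z r) ≤ volume (ball z r ∩ N) + volume (ball z r \ N) := by
      rw [← measure_inter_add_diff (ball z r) hNclosed.measurableSet]
    rw [hcompl, add_zero] at h2
    exact le_antisymm (h2.trans (le_trans (measure_mono Set.inter_subset_right) hNnull.le))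
      zero_le
  exact absurd hzero (measure_ball_pos volume z hr).ne'

theorem Z_strict_midpoint {P : Set E} (hPc : IsCompact P)
    (hPint : (interior P).Nonempty) {x y : E} (hxy : x ≠ y) :
    Real.log (∫ p in P, Real.exp (inner ℝ (midpoint ℝ x y) p : ℝ)) <
      (Real.log (∫ p in P, Real.exp (inner ℝ x p : ℝ))
        + Real.log (∫ p in P, Real.exp (inner ℝ y p : ℝ))) / 2 := by
  set μ := volume.restrict P with hμ
  set f : E → ℝ := fun p => Real.exp ((inner ℝ x p : ℝ) / 2) with hf
  set g : E → ℝ := fun p => Real.exp ((inner ℝ y p : ℝ) / 2) with hg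
  have hcf : Continuous f :=
    Real.continuous_exp.comp ((continuous_const.inner continuous_id).div_const 2)
  have hcg : Continuous g :=
    Real.continuous_exp.comp ((continuous_const.inner continuous_id).div_const 2)
  have hfsq : (fun p : E => f p ^ 2) = fun p : E => Real.exp (inner ℝ x p : ℝ) := by
    funext p; rw [hf, sq, ← Real.exp_add, add_halves]
  have hgsq : (fun p : E => g p ^ 2) = fun p : E => Real.exp (inner ℝ y p : ℝ) := by
    funext p; rw [hg, sq, ← Real.exp_add, add_halves]
  have hfL2 : MemLp f 2 μ :=
    (memLp_two_iff_integrable_sq hcf.aestronglyMeasurable).2 (by rw [hfsq]; exact intExp hPc x)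
  have hgL2 : MemLp g 2 μ :=
    (memLp_two_iff_integrable_sq hcg.aestronglyMeasurable).2 (by rw [hgsq]; exact intExp hPc y)
  set F : Lp ℝ 2 μ := hfL2.toLp f with hF
  set G : Lp ℝ 2 μ := hgL2.toLp g with hG
  have hFf : (F : E → ℝ) =ᵐ[μ] f := hfL2.coeFn_toLp
  have hGg : (G : E → ℝ) =ᵐ[μ] g := hgL2.coeFn_toLp
  have innerFG : (inner ℝ F G : ℝ) = ∫ p, f p * g p ∂μ := by
    rw [L2.inner_def]
    refine integral_congr_ae ?_
    filter_upwards [hFf, hGg] with p hp hq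
    rw [hp, hq]; simp [RCLike.inner_apply, mul_comm]
  have innerFF : (inner ℝ F F : ℝ) = ∫ p in P, Real.exp (inner ℝ x p : ℝ) := by
    rw [L2.inner_def, ← hμ, ← hfsq]
    refine integral_congr_ae ?_
    filter_upwards [hFf] with p hp
    rw [hp]; simp [RCLike.inner_apply, sq]
  have innerGG : (inner ℝ G G : ℝ) = ∫ p in P, Real.exp (inner ℝ y p : ℝ) := by
    rw [L2.inner_def, ← hμ, ← hgsq]
    refine integral_congr_ae ?_
    filter_upwards [hGg] with p hp
    rw [hp]; simp [RCLike.inner_apply, sq]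
  have normF : ‖F‖ = Real.sqrt (∫ p in P, Real.exp (inner ℝ x p : ℝ)) := by
    rw [← innerFF, real_inner_self_eq_norm_sq, Real.sqrt_sq (norm_nonneg _)]
  have normG : ‖G‖ = Real.sqrt (∫ p in P, Real.exp (inner ℝ y p : ℝ)) := by
    rw [← innerGG, real_inner_self_eq_norm_sq, Real.sqrt_sq (norm_nonneg _)]
  have hFnorm_pos : 0 < ‖F‖ := by
    rw [normF]; exact Real.sqrt_pos.2 (Zpos hPc hPint x)
  have hGnorm_pos : 0 < ‖G‖ := by
    rw [normG]; exact Real.sqrt_pos.2 (Zpos hPc hPint y)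
  have strict : (inner ℝ F G : ℝ) < ‖F‖ * ‖G‖ := by
    rw [inner_lt_norm_mul_iff_real]
    intro heq
    have hae : ∀ᵐ p ∂μ, ‖G‖ * f p = ‖F‖ * g p := by
      have h1 : ((‖G‖ • F : Lp ℝ 2 μ) : E → ℝ) =ᵐ[μ] fun p => ‖G‖ * f p := by
        filter_upwards [Lp.coeFn_smul ‖G‖ F, hFf] with p hp hq
        rw [hp]; simp [hq]
      have h2 : ((‖F‖ • G : Lp ℝ 2 μ) : E → ℝ) =ᵐ[μ] fun p => ‖F‖ * g p := by
        filter_upwards [Lp.coeFn_smul ‖F‖ G, hGg] with p hp hq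
        rw [hp]; simp [hq]
      have h3 : ((‖G‖ • F : Lp ℝ 2 μ) : E → ℝ) =ᵐ[μ] ((‖F‖ • G : Lp ℝ 2 μ) : E → ℝ) := by
        rw [heq]
      filter_upwards [h1, h2, h3] with p hp1 hp2 hp3
      rw [← hp1, ← hp2, hp3]
    have hconst : ∀ᵐ p ∂μ, (inner ℝ (x - y) p : ℝ) = 2 * (Real.log ‖F‖ - Real.log ‖G‖) := by
      filter_upwards [hae] with p hp
      have hlog := congrArg Real.log hp
      rw [Real.log_mul hGnorm_pos.ne' (Real.exp_pos _).ne',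
        Real.log_mul hFnorm_pos.ne' (Real.exp_pos _).ne', Real.log_exp, Real.log_exp] at hlog
      rw [inner_sub_left]
      linarith
    exact not_ae_inner_const hPc hPint (sub_ne_zero.2 hxy) _ hconst
  have hmid : (∫ p in P, Real.exp (inner ℝ (midpoint ℝ x y) p : ℝ)) = (inner ℝ F G : ℝ) := by
    rw [innerFG, ← hμ]
    refine integral_congr_ae (Filter.Eventually.of_forall fun p => ?_)
    show Real.exp (inner ℝ (midpoint ℝ x y) p : ℝ) = f p * g p
    have h5 : (inner ℝ (midpoint ℝ x y) p : ℝ) = ((inner ℝ x p : ℝ) + (inner ℝ y p : ℝ)) / 2 := by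
      rw [midpoint_eq_smul_add, real_inner_smul_left, inner_add_left]
      norm_num; ring
    rw [h5, hf, hg, ← Real.exp_add]
    congr 1; ring
  rw [hmid]
  calc Real.log (inner ℝ F G : ℝ) < Real.log (‖F‖ * ‖G‖) := by
        refine Real.log_lt_log ?_ strict
        rw [← hmid]; exact Zpos hPc hPint _
    _ = (Real.log (∫ p in P, Real.exp (inner ℝ x p : ℝ))
        + Real.log (∫ p in P, Real.exp (inner ℝ y p : ℝ))) / 2 := by
        rw [Real.log_mul hFnorm_pos.ne' hGnorm_pos.ne', normF, normG,
          Real.log_sqrt (Zpos hPc hPint x).le, Real.log_sqrt (Zpos hPc hPint y).le]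
        ring

theorem log_Z_lower {P : Set E} (hPc : IsCompact P) {q' : E} {ρ : ℝ}
    (hρ : 0 < ρ) (hball : ball q' ρ ⊆ P) (W : E) :
    Real.log ((volume (ball (0:E) ρ)).toReal) + ((inner ℝ W q' : ℝ) - ρ * ‖W‖)
      ≤ Real.log (∫ p in P, Real.exp (inner ℝ W p : ℝ)) := by
  have hvolpos : 0 < (volume (ball (0:E) ρ)).toReal :=
    ENNReal.toReal_pos (measure_ball_pos volume _ hρ).ne' measure_ball_lt_top.ne
  have h1 : ∫ _ in ball q' ρ, Real.exp ((inner ℝ W q' : ℝ) - ρ * ‖W‖)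
      ≤ ∫ p in ball q' ρ, Real.exp (inner ℝ W p : ℝ) := by
    refine setIntegral_mono_on (integrableOn_const measure_ball_lt_top.ne)
      ((intExp hPc W).mono_set hball) measurableSet_ball fun p hp => ?_
    refine Real.exp_le_exp.2 ?_
    have h2 : (inner ℝ W p : ℝ) = (inner ℝ W q' : ℝ) + (inner ℝ W (p - q') : ℝ) := by
      rw [← inner_add_right]; congr 1; abel
    have h3 : -(ρ * ‖W‖) ≤ (inner ℝ W (p - q') : ℝ) := by
      have h4 : ‖p - q'‖ ≤ ρ := by
        rw [← dist_eq_norm]; exact (mem_ball.mp hp).le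
      nlinarith [abs_nonneg (inner ℝ W (p - q') : ℝ), neg_abs_le (inner ℝ W (p - q') : ℝ),
        norm_nonneg W, mul_le_mul_of_nonneg_left h4 (norm_nonneg W),
        abs_real_inner_le_norm W (p - q')]
    linarith [h2, h3]
  have h5 : ∫ p in ball q' ρ, Real.exp (inner ℝ W p : ℝ)
      ≤ ∫ p in P, Real.exp (inner ℝ W p : ℝ) :=
    setIntegral_mono_set (intExp hPc W)
      (Filter.Eventually.of_forall fun p => (Real.exp_pos _).le)
      (Filter.Eventually.of_forall fun p hp => hball hp)
  have h6 : ∫ _ in ball q' ρ, Real.exp ((inner ℝ W q' : ℝ) - ρ * ‖W‖)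
      = (volume (ball q' ρ)).toReal * Real.exp ((inner ℝ W q' : ℝ) - ρ * ‖W‖) := by
    rw [setIntegral_const]; rfl
  have h7 : (volume (ball q' ρ)) = volume (ball (0:E) ρ) :=
    Measure.addHaar_ball_center volume q' ρ
  calc Real.log ((volume (ball (0:E) ρ)).toReal) + ((inner ℝ W q' : ℝ) - ρ * ‖W‖)
      = Real.log ((volume (ball (0:E) ρ)).toReal
          * Real.exp ((inner ℝ W q' : ℝ) - ρ * ‖W‖)) := by
        rw [Real.log_mul hvolpos.ne' (Real.exp_pos _).ne', Real.log_exp]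
    _ ≤ Real.log (∫ p in P, Real.exp (inner ℝ W p : ℝ)) := by
        refine Real.log_le_log (by positivity) ?_
        rw [← h7, ← h6]
        exact h1.trans h5

theorem G_lower {n k : ℕ} (hk : 0 < k)
    (P : Fin k → Set (EuclideanSpace ℝ (Fin n)))
    (hPc : ∀ α, IsCompact (P α)) (hPconv : ∀ α, Convex ℝ (P α))
    (hPint : ∀ α, (interior (P α)).Nonempty)
    (h0 : 0 ∈ interior (minkSum P)) :
    ∃ C ε : ℝ, 0 < ε ∧ ∀ W : EuclideanSpace ℝ (Fin n), W ≠ 0 →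
      C + ε * ‖W‖ ≤ ∑ α, Real.log (∫ p in P α, Real.exp (inner ℝ W p : ℝ)) := by
  obtain ⟨ε, hε, hb⟩ := Metric.mem_nhds_iff.mp (mem_interior_iff_mem_nhds.mp h0)
  have hz : ∀ α, ∃ z : EuclideanSpace ℝ (Fin n), ∃ ρ : ℝ, 0 < ρ ∧ ball z ρ ⊆ P α := by
    intro α
    obtain ⟨z, hz⟩ := hPint α
    obtain ⟨ρ, hρ, hb'⟩ := Metric.isOpen_iff.mp isOpen_interior z hz
    exact ⟨z, ρ, hρ, hb'.trans interior_subset⟩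
  choose z r hr hball using hz
  set Zs : EuclideanSpace ℝ (Fin n) := ∑ α, z α with hZs
  set D : ℝ := ε/2 + ‖Zs‖ with hD
  have hD0 : 0 < D + 1 := by positivity
  set t : ℝ := (ε/4) / (D + 1) with ht
  have ht0 : 0 < t := by positivity
  have htD : t * D ≤ ε / 4 := by
    rw [ht, div_mul_eq_mul_div, mul_comm]
    rw [div_le_iff₀ hD0]
    have hD2 : 0 ≤ D := by positivity
    nlinarith
  have ht1 : t < 1 := by
    rw [ht, div_lt_one hD0]
    have : 0 ≤ ‖Zs‖ := norm_nonneg _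
    linarith
  set ρ : Fin k → ℝ := fun α => min (t * r α) (ε / (8 * k)) with hρdef
  have hρpos : ∀ α, 0 < ρ α := by
    intro α
    refine lt_min (mul_pos ht0 (hr α)) ?_
    have : (0:ℝ) < k := by exact_mod_cast hk
    positivity
  set C : ℝ := ∑ α, Real.log ((volume (ball (0:EuclideanSpace ℝ (Fin n)) (ρ α))).toReal) with hC
  refine ⟨C, ε/8, by positivity, fun W hW => ?_⟩
  have hWn : 0 < ‖W‖ := norm_pos_iff.mpr hW
  set s : EuclideanSpace ℝ (Fin n) := (ε/2) • (‖W‖⁻¹ • W) with hs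
  have hsn : ‖s‖ = ε/2 := by
    rw [hs, norm_smul, norm_smul, norm_inv, norm_norm, Real.norm_eq_abs,
      abs_of_pos (by positivity : (0:ℝ) < ε/2), inv_mul_cancel₀ hWn.ne', mul_one]
  have hsmem : s ∈ minkSum P := by
    apply hb
    rw [mem_ball, dist_zero_right, hsn]; linarith
  obtain ⟨q, hq, hqs⟩ := hsmem
  have hWs : (inner ℝ W s : ℝ) = ε/2 * ‖W‖ := by
    rw [hs, real_inner_smul_right, real_inner_smul_right, real_inner_self_eq_norm_sq]
    field_simp
  set q' : Fin k → EuclideanSpace ℝ (Fin n) := fun α => q α + t • (z α - q α) with hq'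
  have hball' : ∀ α, ball (q' α) (ρ α) ⊆ P α := by
    intro α w hw
    set v : EuclideanSpace ℝ (Fin n) := z α + t⁻¹ • (w - q' α) with hv
    have hvmem : v ∈ ball (z α) (r α) := by
      rw [mem_ball, dist_eq_norm, hv]
      have h8 : z α + t⁻¹ • (w - q' α) - z α = t⁻¹ • (w - q' α) := by abel
      rw [h8, norm_smul, norm_inv, Real.norm_eq_abs, abs_of_pos ht0]
      have hwd : ‖w - q' α‖ < ρ α := by rw [← dist_eq_norm]; exact mem_ball.mp hw
      have h1 : ‖w - q' α‖ < t * r α := lt_of_lt_of_le hwd (min_le_left _ _)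
      rw [inv_mul_lt_iff₀ ht0]; exact h1
    have hvP : v ∈ P α := hball α hvmem
    have hcomb := hPconv α (hq α) hvP (by linarith : (0:ℝ) ≤ 1 - t) ht0.le (by ring)
    have h9 : (1 - t) • q α + t • v = w := by
      rw [hv, hq']
      rw [smul_add, smul_smul, mul_inv_cancel₀ ht0.ne', one_smul]
      module
    rwa [h9] at hcomb
  have hmain : ∀ α,
      Real.log ((volume (ball (0:EuclideanSpace ℝ (Fin n)) (ρ α))).toReal)
      + ((inner ℝ W (q' α) : ℝ) - ρ α * ‖W‖)
      ≤ Real.log (∫ p in P α, Real.exp (inner ℝ W p : ℝ)) :=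
    fun α => log_Z_lower (hPc α) (hρpos α) (hball' α) W
  have hsum := Finset.sum_le_sum (s := Finset.univ) (fun α _ => hmain α)
  rw [Finset.sum_add_distrib, ← hC, Finset.sum_sub_distrib, ← inner_sum, ← Finset.sum_mul] at hsum
  have hq'sum : (∑ α, q' α) = s + t • (Zs - s) := by
    rw [hq']
    rw [Finset.sum_add_distrib, ← hqs, ← Finset.smul_sum, Finset.sum_sub_distrib, ← hZs, ← hqs]
  have hinner : ε/4 * ‖W‖ ≤ (inner ℝ W (∑ α, q' α) : ℝ) := by
    rw [hq'sum]
    simp only [inner_add_right, inner_sub_right, real_inner_smul_right]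
    rw [hWs]
    have habs : |(inner ℝ W Zs : ℝ)| ≤ ‖W‖ * ‖Zs‖ := abs_real_inner_le_norm W Zs
    have h2 : -(‖W‖ * ‖Zs‖) ≤ (inner ℝ W Zs : ℝ) := neg_le_of_abs_le habs
    have h3 : t * ((inner ℝ W Zs : ℝ) - ε/2 * ‖W‖) ≥ t * (-(‖W‖ * ‖Zs‖) - ε/2 * ‖W‖) := by
      apply mul_le_mul_of_nonneg_left _ ht0.le
      linarith
    have h4 : t * (‖Zs‖ + ε/2) * ‖W‖ ≤ ε/4 * ‖W‖ := by
      apply mul_le_mul_of_nonneg_right _ hWn.le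
      calc t * (‖Zs‖ + ε/2) = t * D := by rw [hD]; ring_nf
        _ ≤ ε/4 := htD
    nlinarith [hWn.le]
  have hρsum : (∑ α, ρ α) ≤ ε / 8 := by
    have hkr : (0:ℝ) < k := by exact_mod_cast hk
    calc (∑ α, ρ α) ≤ ∑ _α : Fin k, ε / (8 * k) :=
          Finset.sum_le_sum fun α _ => min_le_right _ _
      _ = ε / 8 := by
          rw [Finset.sum_const, Finset.card_univ, Fintype.card_fin, nsmul_eq_mul]
          field_simp
  calc C + ε/8 * ‖W‖ ≤ C + ((inner ℝ W (∑ α, q' α) : ℝ) - (∑ α, ρ α) * ‖W‖) := by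
        have h10 : (∑ α, ρ α) * ‖W‖ ≤ ε/8 * ‖W‖ := mul_le_mul_of_nonneg_right hρsum hWn.le
        have h5 : ε / 4 * ‖W‖ - ε/8 * ‖W‖ = ε/8 * ‖W‖ := by ring
        linarith [hinner]
    _ ≤ ∑ α, Real.log (∫ p in P α, Real.exp (inner ℝ W p : ℝ)) := hsum

end WBaryAux

open WBaryAux Real Metric in
/-- Let `P₁, …, P_k ⊂ ℝ^n` be compact convex sets with nonempty interior such
that `0` lies in the interior of the Minkowski sum `P₁ + ⋯ + P_k`. Then the
smooth strictly convex function `G(W) = Σ_α log ∫_{P_α} e^{⟨W,p⟩} dp` is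
proper (`G(W) → +∞` as `|W| → ∞`), and consequently there exists a unique
`W ∈ ℝ^n` such that `Σ_α 𝒜_{P_α}(W) = 0`. -/
theorem sum_logMomentGeneratingFn_proper_and_unique_critical_point
    {n k : ℕ} (hk : 0 < k)
    (P : Fin k → Set (EuclideanSpace ℝ (Fin n)))
    (hPc : ∀ α, IsCompact (P α)) (hPconv : ∀ α, Convex ℝ (P α))
    (hPint : ∀ α, (interior (P α)).Nonempty)
    (h0 : 0 ∈ interior (minkSum P)) :
    Filter.Tendsto (fun W : EuclideanSpace ℝ (Fin n) =>
        ∑ α, Real.log (∫ p in P α, Real.exp (inner ℝ W p : ℝ)))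
      (Filter.comap norm Filter.atTop) Filter.atTop ∧
    ∃! W : EuclideanSpace ℝ (Fin n), ∑ α, wBary (P α) W = 0 := by
  classical
  set G : EuclideanSpace ℝ (Fin n) → ℝ :=
    fun W => ∑ α, Real.log (∫ p in P α, Real.exp (inner ℝ W p : ℝ)) with hGdef
  set g : EuclideanSpace ℝ (Fin n) → EuclideanSpace ℝ (Fin n) :=
    fun W => ∑ α, wBary (P α) W with hgdef
  -- derivative of G
  have hGderiv : ∀ W, HasFDerivAt G (innerSL ℝ (g W)) W := by
    intro W
    have h1 : HasFDerivAt G (∑ α, innerSL ℝ (wBary (P α) W)) W :=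
      HasFDerivAt.fun_sum fun α _ => hasFDerivLogZ (hPc α) (hPint α) W
    have h2 : (∑ α, innerSL ℝ (wBary (P α) W)) = innerSL ℝ (g W) := by
      rw [hgdef, map_sum]
    rwa [h2] at h1
  have hGcont : Continuous G :=
    continuous_iff_continuousAt.2 fun W => (hGderiv W).differentiableAt.continuousAt
  -- convexity of G
  have hGconv : ConvexOn ℝ Set.univ G := by
    have h : ∀ s : Finset (Fin k), ConvexOn ℝ Set.univ
        (fun W : EuclideanSpace ℝ (Fin n) =>
          ∑ α ∈ s, Real.log (∫ p in P α, Real.exp (inner ℝ W p : ℝ))) := by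
      intro s
      induction s using Finset.induction_on with
      | empty => simpa using convexOn_const (0:ℝ) convex_univ
      | @insert α s hα ih =>
          have h2 := (Z_convexOn (hPc α) (hPint α)).add ih
          have h3 : (fun W : EuclideanSpace ℝ (Fin n) =>
              ∑ β ∈ insert α s, Real.log (∫ p in P β, Real.exp (inner ℝ W p : ℝ)))
              = fun W => Real.log (∫ p in P α, Real.exp (inner ℝ W p : ℝ))
                + ∑ β ∈ s, Real.log (∫ p in P β, Real.exp (inner ℝ W p : ℝ)) := by
            funext W; rw [Finset.sum_insert hα]
          rw [h3]; exact h2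
    exact h Finset.univ
  -- strict midpoint inequality for G
  haveI : Nonempty (Fin k) := ⟨⟨0, hk⟩⟩
  have hGmid : ∀ x y : EuclideanSpace ℝ (Fin n), x ≠ y →
      G (midpoint ℝ x y) < (G x + G y) / 2 := by
    intro x y hxy
    have h1 : ∀ α : Fin k,
        Real.log (∫ p in P α, Real.exp (inner ℝ (midpoint ℝ x y) p : ℝ))
          < (Real.log (∫ p in P α, Real.exp (inner ℝ x p : ℝ))
            + Real.log (∫ p in P α, Real.exp (inner ℝ y p : ℝ))) / 2 :=
      fun α => Z_strict_midpoint (hPc α) (hPint α) hxy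
    have h2 := Finset.sum_lt_sum_of_nonempty Finset.univ_nonempty fun α _ => h1 α
    calc G (midpoint ℝ x y) < ∑ α, (Real.log (∫ p in P α, Real.exp (inner ℝ x p : ℝ))
            + Real.log (∫ p in P α, Real.exp (inner ℝ y p : ℝ))) / 2 := h2
      _ = (G x + G y) / 2 := by
          rw [← Finset.sum_div, Finset.sum_add_distrib]
  -- properness
  obtain ⟨C, ε, hε, hbound⟩ := G_lower hk P hPc hPconv hPint h0
  have htend : Filter.Tendsto G (Filter.comap norm Filter.atTop) Filter.atTop := by
    rw [Filter.tendsto_atTop]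
    intro M
    rw [Filter.eventually_comap]
    filter_upwards [Filter.eventually_ge_atTop (max ((M - C)/ε) 1)] with rr hrr W hWr
    have h1 : (1:ℝ) ≤ ‖W‖ := by rw [hWr]; exact le_trans (le_max_right _ _) hrr
    have hW0 : W ≠ 0 := by
      intro h; rw [h, norm_zero] at h1; linarith
    have h2 := hbound W hW0
    have h3 : (M - C)/ε ≤ ‖W‖ := by rw [hWr]; exact le_trans (le_max_left _ _) hrr
    have h4 : M - C ≤ ε * ‖W‖ := by
      rw [div_le_iff₀ hε] at h3; rw [mul_comm]; linarith
    linarith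
  refine ⟨htend, ?_⟩
  -- existence of a minimizer
  set R : ℝ := max ((G 0 + 1 - C)/ε) 1 with hR
  have hR1 : (1:ℝ) ≤ R := le_max_right _ _
  have hout : ∀ W : EuclideanSpace ℝ (Fin n), R ≤ ‖W‖ → G 0 + 1 ≤ G W := by
    intro W hWR
    have h1 : (1:ℝ) ≤ ‖W‖ := le_trans hR1 hWR
    have hW0 : W ≠ 0 := by
      intro h; rw [h, norm_zero] at h1; linarith
    have h2 := hbound W hW0
    have h3 : (G 0 + 1 - C)/ε ≤ ‖W‖ := le_trans (le_max_left _ _) hWR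
    have h4 : G 0 + 1 - C ≤ ε * ‖W‖ := by
      rw [div_le_iff₀ hε] at h3; rw [mul_comm]; linarith
    linarith
  have h0ball : (0 : EuclideanSpace ℝ (Fin n)) ∈ closedBall (0 : EuclideanSpace ℝ (Fin n)) R := by
    rw [mem_closedBall, dist_self]; linarith
  obtain ⟨W₀, hW₀mem, hW₀min⟩ :=
    (isCompact_closedBall (0 : EuclideanSpace ℝ (Fin n)) R).exists_isMinOn
      ⟨0, h0ball⟩ hGcont.continuousOn
  have hmin : ∀ W, G W₀ ≤ G W := by
    intro W
    by_cases hWR : ‖W‖ ≤ R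
    · exact hW₀min (by rwa [mem_closedBall, dist_zero_right])
    · have h1 : G 0 + 1 ≤ G W := hout W (le_of_lt (lt_of_not_ge hWR))
      have h2 : G W₀ ≤ G 0 := hW₀min h0ball
      linarith
  have hcrit0 : g W₀ = 0 := by
    have hloc : IsLocalMin G W₀ := Filter.Eventually.of_forall fun W => hmin W
    have h1 := hloc.hasFDerivAt_eq_zero (hGderiv W₀)
    have h2 : (inner ℝ (g W₀) (g W₀) : ℝ) = 0 := by
      have h3 := congrArg (fun L : EuclideanSpace ℝ (Fin n) →L[ℝ] ℝ => L (g W₀)) h1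
      simpa using h3
    exact inner_self_eq_zero.mp h2
  -- uniqueness of critical points
  have huniq : ∀ W₁ W₂ : EuclideanSpace ℝ (Fin n), g W₁ = 0 → g W₂ = 0 → W₁ = W₂ := by
    intro W₁ W₂ h₁ h₂
    by_contra hne
    set A : ℝ →ᵃ[ℝ] EuclideanSpace ℝ (Fin n) := AffineMap.lineMap W₁ W₂ with hA
    set φ : ℝ → ℝ := G ∘ A with hφ
    have hφconv : ConvexOn ℝ Set.univ φ := by
      have h3 := hGconv.comp_affineMap A
      simpa using h3
    have hAd : ∀ τ : ℝ, HasDerivAt (fun τ : ℝ => A τ) (W₂ - W₁) τ := by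
      intro τ
      have h3 : (fun τ : ℝ => A τ) = fun τ : ℝ => τ • (W₂ - W₁) + W₁ := by
        funext σ; simp [hA, AffineMap.lineMap_apply_module]; module
      rw [h3]
      simpa using ((hasDerivAt_id τ).smul_const (W₂ - W₁)).add_const W₁
    have hφd : ∀ τ : ℝ, HasDerivAt φ (inner ℝ (g (A τ)) (W₂ - W₁) : ℝ) τ := by
      intro τ
      have h3 := (hGderiv (A τ)).comp_hasDerivAt τ (hAd τ)
      simpa [hφ] using h3
    have hd0 : HasDerivAt φ 0 0 := by
      have h3 := hφd 0
      rw [hA] at h3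
      rw [AffineMap.lineMap_apply_zero, h₁, inner_zero_left] at h3
      exact h3
    have hd1 : HasDerivAt φ 0 1 := by
      have h3 := hφd 1
      rw [hA] at h3
      rw [AffineMap.lineMap_apply_one, h₂, inner_zero_left] at h3
      exact h3
    have hs1 := hφconv.le_slope_of_hasDerivAt (Set.mem_univ (0:ℝ))
      (Set.mem_univ (1/2:ℝ)) (by norm_num) hd0
    have hs2 := hφconv.slope_le_of_hasDerivAt (Set.mem_univ (1/2:ℝ))
      (Set.mem_univ (1:ℝ)) (by norm_num) hd1
    rw [slope_def_field] at hs1 hs2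
    have h5 : φ 0 ≤ φ (1/2) := by
      have h6 : (0:ℝ) < 1/2 - 0 := by norm_num
      have := (le_div_iff₀ h6).mp hs1
      linarith
    have h7 : φ 1 ≤ φ (1/2) := by
      have h8 : (0:ℝ) < 1 - 1/2 := by norm_num
      have := (div_le_iff₀ h8).mp hs2
      linarith
    have hA12 : A (1/2 : ℝ) = midpoint ℝ W₁ W₂ := by
      rw [hA]; exact lineMap_one_half W₁ W₂
    have h9 : φ (1/2) < (φ 0 + φ 1) / 2 := by
      have h10 := hGmid W₁ W₂ hne
      have hphalf : φ (1/2 : ℝ) = G (midpoint ℝ W₁ W₂) := by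
        rw [hφ]; simp only [Function.comp_apply]; rw [hA12]
      have hp0 : φ (0:ℝ) = G W₁ := by
        rw [hφ]; simp only [Function.comp_apply]; rw [hA, AffineMap.lineMap_apply_zero]
      have hp1 : φ (1:ℝ) = G W₂ := by
        rw [hφ]; simp only [Function.comp_apply]; rw [hA, AffineMap.lineMap_apply_one]
      rw [hphalf, hp0, hp1]
      exact h10
    linarith
  exact ⟨W₀, hcrit0, fun W hW => huniq W W₀ hW hcrit0⟩
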